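/- Let A be an associative algebra over k and N a Novikov algebra over k. On A ⊗ N, define (a ⊗ u) ≺ (b ⊗ v) = ab ⊗ uv and (a ⊗ u) ≻ (b ⊗ v) = ab ⊗ vu. Then A ⊗ N satisfies the identity (x ≻ y) ≺ z = x ≻ (y ≺ z). -/
import Mathlib

open scoped TensorProduct

/-- On `A ⊗ N` (`A` associative, `N` Novikov) with
`(a⊗u) ≺ (b⊗v) = ab ⊗ uv` and `(a⊗u) ≻ (b⊗v) = ab ⊗ vu`, the identity
`(x ≻ y) ≺ z = x ≻ (y ≺ z)` holds. -/
theorem tensor_identity_one (k A N : Type*) [Field k]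
    [NonUnitalRing A] [Module k A] [SMulCommClass k A A] [IsScalarTower k A A]
    [NonUnitalNonAssocRing N] [Module k N] [SMulCommClass k N N]
    [IsScalarTower k N N]
    (hN1 : ∀ u v w : N, (u * v) * w - u * (v * w) = (v * u) * w - v * (u * w))
    (hN2 : ∀ u v w : N, (u * v) * w = (u * w) * v)
    (prec succ : A ⊗[k] N →ₗ[k] A ⊗[k] N →ₗ[k] A ⊗[k] N)
    (hprec : ∀ (a b : A) (u v : N), prec (a ⊗ₜ u) (b ⊗ₜ v) = (a * b) ⊗ₜ (u * v))
    (hsucc : ∀ (a b : A) (u v : N), succ (a ⊗ₜ u) (b ⊗ₜ v) = (a * b) ⊗ₜ (v * u)) :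
    ∀ x y z : A ⊗[k] N, prec (succ x y) z = succ x (prec y z) := by
  intro x y z
  induction x using TensorProduct.induction_on with
  | zero => simp
  | add x₁ x₂ h1 h2 => simp [map_add, h1, h2]
  | tmul a u =>
    induction y using TensorProduct.induction_on with
    | zero => simp
    | add y₁ y₂ h1 h2 => simp [map_add, h1, h2]
    | tmul b v =>
      induction z using TensorProduct.induction_on with
      | zero => simp
      | add z₁ z₂ h1 h2 => simp [map_add, h1, h2]
      | tmul c w =>
        rw [hsucc, hprec, hprec, hsucc, mul_assoc, hN2]
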